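/- arXiv:1409.1910 — 2 statements merged into one kernel-verified Lean document; each statement's English description precedes it below -/
import Mathlib

section
/- Let H be the set of permutations φ ∈ Equiv.Perm (Fin 6) for which there exists σ ∈ Equiv.Perm (Fin 5) with c (φ i) (φ j) = σ (c i j) for all i ≠ j. Then H is a subgroup of Equiv.Perm (Fin 6), for each φ ∈ H the permutation σ is uniquely determined, and the resulting map H → Equiv.Perm (Fin 5), φ ↦ σ, is a group isomorphism. (The group of colour-permuting automorphisms of the 1-factorized K₆ is isomorphic to 𝔖₅; this is the combinatorial content of the fact that the isometry group of the building block ℬ is 𝔖₅.) -/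
open Fin.NatCast in
/-- The 1-factorization of `K₆`: the edge `{i, j}` of the complete graph on
`Fin 6` gets the colour `(i + j) mod 5` if `i, j ≤ 4`, and the edge `{i, 5}`
gets the colour `(2 * i) mod 5`. -/
def c (i j : Fin 6) : Fin 5 :=
  if i.val = 5 then ((2 * j.val : ℕ) : Fin 5)
  else if j.val = 5 then ((2 * i.val : ℕ) : Fin 5)
  else ((i.val + j.val : ℕ) : Fin 5)

/-- every colour is attained -/
lemma c_surj : ∀ k : Fin 5, ∃ i j : Fin 6, i ≠ j ∧ c i j = k := by decide

/-- uniqueness of the colour permutation -/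
lemma sigma_unique (φ : Equiv.Perm (Fin 6)) (σ σ' : Equiv.Perm (Fin 5))
    (h : ∀ i j : Fin 6, i ≠ j → c (φ i) (φ j) = σ (c i j))
    (h' : ∀ i j : Fin 6, i ≠ j → c (φ i) (φ j) = σ' (c i j)) : σ = σ' := by
  ext k
  obtain ⟨i, j, hij, hc⟩ := c_surj k
  have := (h i j hij).symm.trans (h' i j hij)
  rw [hc] at this
  exact congrArg Fin.val this

def Hgrp : Subgroup (Equiv.Perm (Fin 6)) where
  carrier := {φ | ∃ σ : Equiv.Perm (Fin 5), ∀ i j : Fin 6, i ≠ j →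
      c (φ i) (φ j) = σ (c i j)}
  one_mem' := ⟨1, fun i j _ => rfl⟩
  mul_mem' := by
    rintro a b ⟨σa, ha⟩ ⟨σb, hb⟩
    refine ⟨σa * σb, fun i j hij => ?_⟩
    have hbij : b i ≠ b j := fun h => hij (b.injective h)
    simp only [Equiv.Perm.mul_apply]
    rw [ha _ _ hbij, hb _ _ hij]
  inv_mem' := by
    rintro a ⟨σ, ha⟩
    refine ⟨σ⁻¹, fun i j hij => ?_⟩
    have hij' : a⁻¹ i ≠ a⁻¹ j := fun h => hij (a⁻¹.injective h)
    have := ha _ _ hij'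
    rw [show ∀ x, a (a⁻¹ x) = x from a.apply_symm_apply,
      show ∀ x, a (a⁻¹ x) = x from a.apply_symm_apply] at this
    rw [this, show ∀ x, σ⁻¹ (σ x) = x from σ.symm_apply_apply]

noncomputable def sig (φ : Hgrp) : Equiv.Perm (Fin 5) := φ.2.choose

lemma sig_spec (φ : Hgrp) : ∀ i j : Fin 6, i ≠ j →
    c ((φ : Equiv.Perm (Fin 6)) i) ((φ : Equiv.Perm (Fin 6)) j) = sig φ (c i j) :=
  φ.2.choose_spec

noncomputable def F : Hgrp →* Equiv.Perm (Fin 5) where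
  toFun := sig
  map_one' := by
    refine sigma_unique 1 (sig 1) 1 (sig_spec 1) (fun i j _ => rfl)
  map_mul' := by
    intro a b
    refine sigma_unique (↑(a * b)) (sig (a * b)) (sig a * sig b) (sig_spec (a * b)) ?_
    intro i j hij
    have hbij : (b : Equiv.Perm (Fin 6)) i ≠ (b : Equiv.Perm (Fin 6)) j :=
      fun h => hij ((b : Equiv.Perm (Fin 6)).injective h)
    simp only [Subgroup.coe_mul, Equiv.Perm.mul_apply]
    rw [sig_spec a _ _ hbij, sig_spec b _ _ hij]

set_option maxHeartbeats 4000000 in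
set_option maxRecDepth 10000 in
lemma colour_fixing_trivial :
    ∀ φ : Equiv.Perm (Fin 6), (∀ i j, i ≠ j → c (φ i) (φ j) = c i j) → φ = 1 := by
  decide

lemma F_inj : Function.Injective F := by
  rw [injective_iff_map_eq_one]
  intro φ hφ
  have h := sig_spec φ
  rw [show sig φ = F φ from rfl, hφ] at h
  have : (φ : Equiv.Perm (Fin 6)) = 1 :=
    colour_fixing_trivial _ (fun i j hij => h i j hij)
  exact Subtype.ext this

def phiRot : Equiv.Perm (Fin 6) :=
  ⟨![3, 4, 0, 1, 2, 5], ![2, 3, 4, 0, 1, 5], by decide, by decide⟩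

def phiSwap : Equiv.Perm (Fin 6) :=
  ⟨![2, 3, 0, 1, 5, 4], ![2, 3, 0, 1, 5, 4], by decide, by decide⟩

lemma phiRot_spec : ∀ i j : Fin 6, i ≠ j → c (phiRot i) (phiRot j) = finRotate 5 (c i j) := by
  decide

lemma phiSwap_spec : ∀ i j : Fin 6, i ≠ j →
    c (phiSwap i) (phiSwap j) = Equiv.swap (0 : Fin 5) 1 (c i j) := by
  decide

lemma phiRot_mem : phiRot ∈ Hgrp := ⟨finRotate 5, phiRot_spec⟩
lemma phiSwap_mem : phiSwap ∈ Hgrp := ⟨Equiv.swap 0 1, phiSwap_spec⟩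

lemma F_surj : Function.Surjective F := by
  intro σ
  have hrot : finRotate 5 ∈ F.range :=
    ⟨⟨phiRot, phiRot_mem⟩,
      sigma_unique phiRot _ _ (sig_spec ⟨phiRot, phiRot_mem⟩) phiRot_spec⟩
  have hswap : Equiv.swap (0 : Fin 5) 1 ∈ F.range :=
    ⟨⟨phiSwap, phiSwap_mem⟩,
      sigma_unique phiSwap _ _ (sig_spec ⟨phiSwap, phiSwap_mem⟩) phiSwap_spec⟩
  have htop : Subgroup.closure {finRotate 5, Equiv.swap (0 : Fin 5) (finRotate 5 0)} = ⊤ :=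
    Equiv.Perm.closure_cycle_adjacent_swap isCycle_finRotate support_finRotate 0
  have h01 : Equiv.swap (0 : Fin 5) (finRotate 5 0) = Equiv.swap (0 : Fin 5) 1 := by decide
  have hle : Subgroup.closure {finRotate 5, Equiv.swap (0 : Fin 5) (finRotate 5 0)} ≤ F.range := by
    rw [Subgroup.closure_le]
    rintro x (rfl | rfl)
    · exact hrot
    · rw [h01]; exact hswap
  have : σ ∈ F.range := hle (htop ▸ Subgroup.mem_top σ)
  exact this

/-- The colour-permuting automorphisms of the 1-factorized `K₆` form a
subgroup `H` of `Equiv.Perm (Fin 6)`; for each such automorphism `φ` the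
colour permutation `σ` is unique, and `φ ↦ σ` is a group isomorphism of `H`
onto `𝔖₅`. -/
theorem colourPermutingAutomorphisms_iso_S5 :
    ∃ H : Subgroup (Equiv.Perm (Fin 6)),
      (H : Set (Equiv.Perm (Fin 6))) =
        {φ | ∃ σ : Equiv.Perm (Fin 5), ∀ i j : Fin 6, i ≠ j →
          c (φ i) (φ j) = σ (c i j)} ∧
      (∀ (φ : Equiv.Perm (Fin 6)) (σ σ' : Equiv.Perm (Fin 5)),
        (∀ i j : Fin 6, i ≠ j → c (φ i) (φ j) = σ (c i j)) →
        (∀ i j : Fin 6, i ≠ j → c (φ i) (φ j) = σ' (c i j)) → σ = σ') ∧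
      ∃ F : H →* Equiv.Perm (Fin 5),
        Function.Bijective F ∧
        ∀ (φ : H) (i j : Fin 6), i ≠ j →
          c ((φ : Equiv.Perm (Fin 6)) i) ((φ : Equiv.Perm (Fin 6)) j) =
            F φ (c i j) := by
  refine ⟨Hgrp, rfl, sigma_unique, F, ⟨F_inj, F_surj⟩, ?_⟩
  intro φ i j hij
  exact sig_spec φ i j hij
end

section
/- Let H' be the set of permutations φ ∈ Equiv.Perm (Fin 6) for which there exists a permutation σ of the colour set {1,2,3,4} ⊆ Fin 5 such that for all i ≠ j with c i j ≠ 0 one has c (φ i) (φ j) ≠ 0 and c (φ i) (φ j) = σ (c i j). Then H' is a group, for each φ ∈ H' the permutation σ is unique, and the map φ ↦ σ is a group isomorphism from H' onto the symmetric group on the four colours {1,2,3,4} (i.e., H' ≅ Equiv.Perm (Fin 4)). (The group of label-permuting automorphisms of the labelled octahedral graph Γ̂ is 𝔖₄; this is the combinatorial content of the fact that the isometry group of the boundary manifold 𝒟 is 𝔖₄.) -/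
/-- The colour set of the octahedral graph `Γ̂`. -/
def S : Set (Fin 5) := {1, 2, 3, 4}

namespace Oct

def Sf : Finset (Fin 5) := {1, 2, 3, 4}

lemma memS (x : Fin 5) : x ∈ S ↔ x ∈ Sf := by
  simp [S, Sf]

lemma mem_S_iff (x : Fin 5) : x ∈ S ↔ x ≠ 0 := by
  fin_cases x <;> simp [S]

/-- The labelled-automorphism property. -/
def P (φ : Equiv.Perm (Fin 6)) (σ : Equiv.Perm (Fin 5)) : Prop :=
  ∀ i j : Fin 6, i ≠ j → c i j ∈ S →
    c (φ i) (φ j) ∈ S ∧ c (φ i) (φ j) = σ (c i j)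

abbrev Pd (φ : Equiv.Perm (Fin 6)) (σ : Equiv.Perm (Fin 5)) : Prop :=
  ∀ i j : Fin 6, i ≠ j → c i j ∈ Sf →
    c (φ i) (φ j) ∈ Sf ∧ c (φ i) (φ j) = σ (c i j)

lemma Pd_iff (φ : Equiv.Perm (Fin 6)) (σ : Equiv.Perm (Fin 5)) : Pd φ σ ↔ P φ σ := by
  constructor <;> intro h i j hij hc
  · have := h i j hij ((memS _).mp hc)
    exact ⟨(memS _).mpr this.1, this.2⟩
  · have := h i j hij ((memS _).mpr hc)
    exact ⟨(memS _).mp this.1, this.2⟩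

lemma imageS_iff (σ : Equiv.Perm (Fin 5)) : σ '' S = S ↔ σ 0 = 0 := by
  constructor
  · intro h
    have h0 : σ 0 ∉ S := by
      intro hmem
      rw [← h] at hmem
      obtain ⟨x, hx, he⟩ := hmem
      have : x = 0 := σ.injective he
      rw [this] at hx
      exact (by simp [mem_S_iff] at hx)
    simpa [mem_S_iff, not_ne_iff] using h0
  · intro h0
    ext y
    simp only [mem_S_iff, Set.mem_image]
    constructor
    · rintro ⟨x, hx, rfl⟩
      intro hy
      exact hx (σ.injective (hy.trans h0.symm))
    · intro hy
      refine ⟨σ.symm y, ?_, σ.apply_symm_apply y⟩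
      intro hz
      exact hy (by rw [← σ.apply_symm_apply y, hz, h0])

lemma edgecol (k : Fin 5) (hk : k ≠ 0) :
    ∃ i j : Fin 6, i ≠ j ∧ c i j ∈ S ∧ c i j = k := by
  have hS : ∀ m : Fin 5, m ≠ 0 → m ∈ S := fun m hm => (mem_S_iff m).mpr hm
  fin_cases k
  · exact absurd rfl hk
  · exact ⟨0, 1, by decide, hS _ (by decide), by decide⟩
  · exact ⟨0, 2, by decide, hS _ (by decide), by decide⟩
  · exact ⟨0, 3, by decide, hS _ (by decide), by decide⟩
  · exact ⟨0, 4, by decide, hS _ (by decide), by decide⟩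

/-- Uniqueness of the label permutation. -/
lemma uniq (φ : Equiv.Perm (Fin 6)) (σ σ' : Equiv.Perm (Fin 5))
    (hσ : σ '' S = S) (hσ' : σ' '' S = S)
    (h : ∀ i j : Fin 6, i ≠ j → c i j ∈ S → c (φ i) (φ j) = σ (c i j))
    (h' : ∀ i j : Fin 6, i ≠ j → c i j ∈ S → c (φ i) (φ j) = σ' (c i j)) :
    σ = σ' := by
  apply Equiv.ext
  intro x
  by_cases hx : x = 0
  · rw [hx, (imageS_iff σ).mp hσ, (imageS_iff σ').mp hσ']
  · obtain ⟨i, j, hij, hcS, hc⟩ := edgecol x hx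
    rw [← hc, ← h i j hij hcS, h' i j hij hcS]

lemma edge_inv (φ : Equiv.Perm (Fin 6))
    (hφ : ∀ i j : Fin 6, i ≠ j → c i j ∈ S → c (φ i) (φ j) ∈ S) :
    ∀ i j : Fin 6, i ≠ j → c i j ∈ S → c (φ⁻¹ i) (φ⁻¹ j) ∈ S := by
  classical
  set E : Finset (Fin 6 × Fin 6) :=
    Finset.univ.filter (fun p : Fin 6 × Fin 6 => p.1 ≠ p.2 ∧ c p.1 p.2 ∈ Sf) with hE
  have hinj : Function.Injective (fun p : Fin 6 × Fin 6 => (φ p.1, φ p.2)) := by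
    intro p q hpq
    simp only [Prod.mk.injEq] at hpq
    exact Prod.ext (φ.injective hpq.1) (φ.injective hpq.2)
  have himg : E.image (fun p : Fin 6 × Fin 6 => (φ p.1, φ p.2)) = E := by
    apply Finset.eq_of_subset_of_card_le
    · intro q hq
      simp only [Finset.mem_image] at hq
      obtain ⟨p, hp, rfl⟩ := hq
      rw [hE, Finset.mem_filter] at hp ⊢
      refine ⟨Finset.mem_univ _, fun he => hp.2.1 (φ.injective he), ?_⟩
      exact (memS _).mp (hφ p.1 p.2 hp.2.1 ((memS _).mpr hp.2.2))
    · rw [Finset.card_image_of_injective _ hinj]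
  intro i j hij hc
  have hmem : (i, j) ∈ E := by
    rw [hE, Finset.mem_filter]
    exact ⟨Finset.mem_univ _, hij, (memS _).mp hc⟩
  rw [← himg, Finset.mem_image] at hmem
  obtain ⟨p, hp, he⟩ := hmem
  simp only [Prod.mk.injEq] at he
  have h1 : φ⁻¹ i = p.1 := by rw [← he.1]; exact φ.symm_apply_apply p.1
  have h2 : φ⁻¹ j = p.2 := by rw [← he.2]; exact φ.symm_apply_apply p.2
  rw [h1, h2]
  rw [hE, Finset.mem_filter] at hp
  exact (memS _).mpr hp.2.2

/-- The subgroup `H'`. -/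
def H' : Subgroup (Equiv.Perm (Fin 6)) where
  carrier := {φ | ∃ σ : Equiv.Perm (Fin 5), σ '' S = S ∧
    ∀ i j : Fin 6, i ≠ j → c i j ∈ S →
      c (φ i) (φ j) ∈ S ∧ c (φ i) (φ j) = σ (c i j)}
  one_mem' := by
    refine ⟨1, by simp, fun i j hij hc => ⟨hc, rfl⟩⟩
  mul_mem' := by
    rintro a b ⟨σa, hσa, ha⟩ ⟨σb, hσb, hb⟩
    refine ⟨σa * σb, ?_, ?_⟩
    · have : (σa * σb) '' S = σa '' (σb '' S) := by
        rw [← Set.image_comp]; rfl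
      rw [this, hσb, hσa]
    · intro i j hij hc
      have hbij := hb i j hij hc
      have hne : b i ≠ b j := fun h => hij (b.injective h)
      have ha' := ha (b i) (b j) hne hbij.1
      refine ⟨ha'.1, ?_⟩
      show c (a (b i)) (a (b j)) = σa (σb (c i j))
      rw [← hbij.2]
      exact ha'.2
  inv_mem' := by
    rintro a ⟨σ, hσ, h⟩
    refine ⟨σ⁻¹, ?_, ?_⟩
    · have : ⇑σ⁻¹ '' S = ⇑σ⁻¹ '' (⇑σ '' S) := by rw [hσ]
      rw [this, ← Set.image_comp]
      have h2 : (⇑σ⁻¹ ∘ ⇑σ) = id := by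
        funext x; exact σ.symm_apply_apply x
      rw [h2, Set.image_id]
    · intro i j hij hc
      have h1 : a⁻¹ i ≠ a⁻¹ j := fun e => hij ((Equiv.injective a⁻¹) e)
      have h2 : c (a⁻¹ i) (a⁻¹ j) ∈ S :=
        edge_inv a (fun i j hij hc => (h i j hij hc).1) i j hij hc
      refine ⟨h2, ?_⟩
      have h3 := (h _ _ h1 h2).2
      rw [show ∀ x, a (a⁻¹ x) = x from a.apply_symm_apply, show ∀ x, a (a⁻¹ x) = x from a.apply_symm_apply] at h3
      rw [h3, show ∀ x, σ⁻¹ (σ x) = x from σ.symm_apply_apply]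

lemma mem_H'_iff (φ : Equiv.Perm (Fin 6)) :
    φ ∈ H' ↔ ∃ σ : Equiv.Perm (Fin 5), σ '' S = S ∧ P φ σ := Iff.rfl

noncomputable def sig (φ : H') : Equiv.Perm (Fin 5) := φ.2.choose

lemma sig_spec (φ : H') : (sig φ) '' S = S ∧ P (φ : Equiv.Perm (Fin 6)) (sig φ) := φ.2.choose_spec

lemma sig_eq (φ : H') (σ : Equiv.Perm (Fin 5)) (hσ : σ '' S = S)
    (h : P (φ : Equiv.Perm (Fin 6)) σ) : sig φ = σ :=
  uniq φ _ _ (sig_spec φ).1 hσ (fun i j hij hc => ((sig_spec φ).2 i j hij hc).2)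
    (fun i j hij hc => (h i j hij hc).2)

noncomputable def F : H' →* Equiv.Perm (Fin 5) :=
  MonoidHom.mk' sig (by
    intro a b
    apply sig_eq
    · have : (sig a * sig b) '' S = sig a '' (sig b '' S) := by
        rw [← Set.image_comp]; rfl
      rw [this, (sig_spec b).1, (sig_spec a).1]
    · intro i j hij hc
      have hb := (sig_spec b).2 i j hij hc
      have hne : (b : Equiv.Perm (Fin 6)) i ≠ (b : Equiv.Perm (Fin 6)) j :=
        fun h => hij ((b : Equiv.Perm (Fin 6)).injective h)
      have ha := (sig_spec a).2 _ _ hne hb.1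
      refine ⟨ha.1, ?_⟩
      rw [Equiv.Perm.mul_apply, ← hb.2]
      exact ha.2)

lemma F_apply (φ : H') : F φ = sig φ := rfl

set_option maxRecDepth 10000 in
set_option maxHeartbeats 1000000 in
lemma ker_triv : ∀ φ : Equiv.Perm (Fin 6),
    (∀ i j : Fin 6, i ≠ j → c i j ∈ Sf → c (φ i) (φ j) = c i j) → φ = 1 := by decide

lemma F_injective : Function.Injective F := by
  rw [injective_iff_map_eq_one]
  intro φ hφ
  have hvals : ∀ i j : Fin 6, i ≠ j → c i j ∈ Sf →
      c ((φ : Equiv.Perm (Fin 6)) i) ((φ : Equiv.Perm (Fin 6)) j) = c i j := by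
    intro i j hij hc
    have := ((sig_spec φ).2 i j hij ((memS _).mpr hc)).2
    rw [this, show sig φ = 1 from hφ]
    rfl
  exact Subtype.ext (ker_triv _ hvals)

-- the embedding Perm (Fin 4) →* Perm (Fin 5) fixing 0
def f4 : Fin 4 ≃ {x : Fin 5 // x ≠ 0} where
  toFun k := ⟨k.succ, Fin.succ_ne_zero k⟩
  invFun x := (x.1).pred x.2
  left_inv k := by simp
  right_inv x := by simp

def G : Equiv.Perm (Fin 4) →* Equiv.Perm (Fin 5) := Equiv.Perm.extendDomainHom f4

lemma G_zero (τ : Equiv.Perm (Fin 4)) : G τ 0 = 0 :=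
  Equiv.Perm.extendDomain_apply_not_subtype τ f4 (by simp)

lemma mem_G_range (σ : Equiv.Perm (Fin 5)) (h0 : σ 0 = 0) : σ ∈ G.range := by
  have hp : ∀ x : Fin 5, x ≠ 0 ↔ σ x ≠ 0 := by
    intro x
    constructor
    · intro hx he
      exact hx (σ.injective (he.trans h0.symm))
    · intro hx he
      rw [he] at hx; exact hx h0
  refine ⟨(Equiv.permCongr f4).symm (σ.subtypePerm (fun x => (hp x).symm)), ?_⟩
  apply Equiv.ext
  intro x
  by_cases hx : x = 0
  · rw [hx, G_zero, h0]
  · have hx' : x = (f4 (f4.symm ⟨x, hx⟩)).1 := by simp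
    rw [hx']
    have := Equiv.Perm.extendDomain_apply_image
      ((Equiv.permCongr f4).symm (σ.subtypePerm (fun x => (hp x).symm))) f4 (f4.symm ⟨x, hx⟩)
    rw [show (G ((Equiv.permCongr f4).symm (σ.subtypePerm (fun x => (hp x).symm)))) = Equiv.Perm.extendDomain
      ((Equiv.permCongr f4).symm (σ.subtypePerm (fun x => (hp x).symm))) f4 from rfl, this]
    simp [Equiv.permCongr_symm, Equiv.permCongr_apply, Equiv.Perm.subtypePerm_apply]

-- explicit automorphisms realizing the transpositions of colours
def mkP (f g : Fin 6 → Fin 6) (h1 : Function.LeftInverse g f)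
    (h2 : Function.RightInverse g f) : Equiv.Perm (Fin 6) := ⟨f, g, h1, h2⟩

def φ12 : Equiv.Perm (Fin 6) := mkP ![3,4,5,0,1,2] ![3,4,5,0,1,2] (by decide) (by decide)
def φ13 : Equiv.Perm (Fin 6) := mkP ![4,5,3,2,0,1] ![4,5,3,2,0,1] (by decide) (by decide)
def φ14 : Equiv.Perm (Fin 6) := mkP ![5,2,1,4,3,0] ![5,2,1,4,3,0] (by decide) (by decide)
def φ23 : Equiv.Perm (Fin 6) := mkP ![5,3,4,1,2,0] ![5,3,4,1,2,0] (by decide) (by decide)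
def φ24 : Equiv.Perm (Fin 6) := mkP ![1,0,3,2,5,4] ![1,0,3,2,5,4] (by decide) (by decide)
def φ34 : Equiv.Perm (Fin 6) := mkP ![2,4,0,5,1,3] ![2,4,0,5,1,3] (by decide) (by decide)

lemma mem_F_range_of_Pd (φ : Equiv.Perm (Fin 6)) (σ : Equiv.Perm (Fin 5))
    (h0 : σ 0 = 0) (h : Pd φ σ) : σ ∈ F.range := by
  have hσ : σ '' S = S := (imageS_iff σ).mpr h0
  have hP : P φ σ := (Pd_iff φ σ).mp h
  exact ⟨⟨φ, σ, hσ, hP⟩, sig_eq _ _ hσ hP⟩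

lemma G_range_le : G.range ≤ F.range := by
  rw [MonoidHom.range_eq_map, ← Equiv.Perm.closure_isSwap, MonoidHom.map_closure,
    Subgroup.closure_le]
  rintro σ ⟨τ, ⟨a, b, hab, rfl⟩, rfl⟩
  fin_cases a <;> fin_cases b <;>
    first
      | exact absurd rfl hab
      | exact mem_F_range_of_Pd φ12 _ (by decide) (by decide)
      | exact mem_F_range_of_Pd φ13 _ (by decide) (by decide)
      | exact mem_F_range_of_Pd φ14 _ (by decide) (by decide)
      | exact mem_F_range_of_Pd φ23 _ (by decide) (by decide)
      | exact mem_F_range_of_Pd φ24 _ (by decide) (by decide)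
      | exact mem_F_range_of_Pd φ34 _ (by decide) (by decide)

lemma F_surj (σ : Equiv.Perm (Fin 5)) (hσ : σ '' S = S) : ∃ φ : H', F φ = σ := by
  have h0 : σ 0 = 0 := (imageS_iff σ).mp hσ
  have := G_range_le (mem_G_range σ h0)
  exact this

lemma range_eq : F.range = G.range := by
  ext σ
  constructor
  · rintro ⟨φ, rfl⟩
    exact mem_G_range _ ((imageS_iff _).mp (sig_spec φ).1)
  · intro h
    obtain ⟨τ, rfl⟩ := h
    have := F_surj (G τ) ((imageS_iff _).mpr (G_zero τ))
    obtain ⟨φ, hφ⟩ := this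
    exact ⟨φ, hφ⟩

end Oct

/-- The label-permuting automorphisms of the labelled octahedral graph `Γ̂`
(the graph on `Fin 6` whose edges are the edges of `K₆` with colour in
`{1,2,3,4}`) form a subgroup `H'` of `Equiv.Perm (Fin 6)`; for each
`φ ∈ H'` the label permutation `σ` is unique, and `φ ↦ σ` is a group
isomorphism from `H'` onto the symmetric group on the four colours
`{1,2,3,4}`, so `H' ≅ 𝔖₄`. -/
theorem labelPermutingAutomorphisms_iso_S4 :
    ∃ H : Subgroup (Equiv.Perm (Fin 6)),
      (H : Set (Equiv.Perm (Fin 6))) =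
        {φ | ∃ σ : Equiv.Perm (Fin 5), σ '' S = S ∧
          ∀ i j : Fin 6, i ≠ j → c i j ∈ S →
            c (φ i) (φ j) ∈ S ∧ c (φ i) (φ j) = σ (c i j)} ∧
      (∀ (φ : Equiv.Perm (Fin 6)) (σ σ' : Equiv.Perm (Fin 5)),
        σ '' S = S → σ' '' S = S →
        (∀ i j : Fin 6, i ≠ j → c i j ∈ S → c (φ i) (φ j) = σ (c i j)) →
        (∀ i j : Fin 6, i ≠ j → c i j ∈ S → c (φ i) (φ j) = σ' (c i j)) →
        σ = σ') ∧
      ∃ F : H →* Equiv.Perm (Fin 5),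
        Function.Injective F ∧
        (∀ φ : H, (F φ) '' S = S ∧
          ∀ i j : Fin 6, i ≠ j → c i j ∈ S →
            c ((φ : Equiv.Perm (Fin 6)) i) ((φ : Equiv.Perm (Fin 6)) j) =
              F φ (c i j)) ∧
        (∀ σ : Equiv.Perm (Fin 5), σ '' S = S → ∃ φ : H, F φ = σ) ∧
        Nonempty (H ≃* Equiv.Perm (Fin 4)) := by
  classical
  refine ⟨Oct.H', rfl, Oct.uniq, Oct.F, Oct.F_injective, ?_, Oct.F_surj, ?_⟩
  · intro φ
    exact ⟨(Oct.sig_spec φ).1, fun i j hij hc => ((Oct.sig_spec φ).2 i j hij hc).2⟩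
  · exact ⟨(MonoidHom.ofInjective Oct.F_injective).trans
      ((MulEquiv.subgroupCongr Oct.range_eq).trans
        (MonoidHom.ofInjective (Equiv.Perm.extendDomainHom_injective Oct.f4)).symm)⟩
end
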